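/- Let σ be an almost-sure policy with domain W (for data Q, ≤, F_1, F_{>0}, Δ). Then: (i) for every q ∈ W, for μ-almost every coin sequence b ∈ {0,1}^ℕ, the largest state occurring infinitely often in the trajectory from q driven by b belongs to F_1; and (ii) for every q ∈ F_{>0} ∩ W, the set of coin sequences b such that the trajectory from q driven by b stays in F_{>0} forever has positive μ-measure. -/

import Mathlib

open MeasureTheory

/-- The cylinder of a finite binary word `w`. -/
def cylinder (w : List Bool) : Set (ℕ → Bool) :=
  {b | ∀ i : Fin w.length, b i = w.get i}

/-- `μ` is the uniform probability measure on `{0,1}^ℕ`: the infinite product of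
fair-coin Bernoulli(1/2) measures. -/
def IsUniformBernoulli (μ : Measure (ℕ → Bool)) : Prop :=
  IsProbabilityMeasure μ ∧ ∀ w : List Bool, μ (cylinder w) = (2 : ENNReal)⁻¹ ^ w.length

/-- The trajectory from `q` driven by the coin sequence `b`. -/
def traj {Q : Type} (σ : Q → Q × Q) (q : Q) (b : ℕ → Bool) : ℕ → Q
  | 0 => q
  | i + 1 => if b i then (σ (traj σ q b i)).2 else (σ (traj σ q b i)).1

/-- A policy with domain `W`. -/
def IsPolicy {Q : Type} (Δ : Set (Q × Q × Q)) (W : Finset Q) (σ : Q → Q × Q) : Prop :=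
  ∀ q ∈ W, (q, (σ q).1, (σ q).2) ∈ Δ ∧ (σ q).1 ∈ W ∧ (σ q).2 ∈ W

/-- An ergodic class of the policy `σ` with domain `W`. -/
def IsErgodicClass {Q : Type} (W : Finset Q) (σ : Q → Q × Q) (C : Set Q) : Prop :=
  C.Nonempty ∧ C ⊆ (W : Set Q) ∧ (∀ q ∈ C, (σ q).1 ∈ C ∧ (σ q).2 ∈ C) ∧
    ∀ C' : Set Q, C' ⊆ C → C'.Nonempty →
      (∀ q ∈ C', (σ q).1 ∈ C' ∧ (σ q).2 ∈ C') → C' = C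

/-- An almost-sure policy. -/
def IsAlmostSurePolicy {Q : Type} [LinearOrder Q] (F1 F0 : Set Q)
    (Δ : Set (Q × Q × Q)) (W : Finset Q) (σ : Q → Q × Q) : Prop :=
  IsPolicy Δ W σ ∧
  (∀ C : Set Q, IsErgodicClass W σ C → ∃ m ∈ C, (∀ q ∈ C, q ≤ m) ∧ m ∈ F1) ∧
  (∀ q, q ∈ W → q ∈ F0 → ∃ (k : ℕ) (p : ℕ → Q), p 0 = q ∧
    (∀ i < k, p (i + 1) = (σ (p i)).1 ∨ p (i + 1) = (σ (p i)).2) ∧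
    (∀ i ≤ k, p i ∈ F0 ∧ p i ∈ W) ∧
    ∃ C : Set Q, IsErgodicClass W σ C ∧ C ⊆ F0 ∧ p k ∈ C)

namespace Stmt11

variable {Q : Type}

def step (σ : Q → Q × Q) (s : Q) (bit : Bool) : Q := if bit then (σ s).2 else (σ s).1

lemma traj_succ (σ : Q → Q × Q) (q : Q) (b : ℕ → Bool) (i : ℕ) :
    traj σ q b (i + 1) = step σ (traj σ q b i) (b i) := rfl

def sfold (σ : Q → Q × Q) (s : Q) (w : List Bool) : Q := w.foldl (step σ) s

@[simp] lemma sfold_nil (σ : Q → Q × Q) (s : Q) : sfold σ s [] = s := rfl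

lemma sfold_append (σ : Q → Q × Q) (s : Q) (v w : List Bool) :
    sfold σ s (v ++ w) = sfold σ (sfold σ s v) w := List.foldl_append ..

lemma sfold_concat (σ : Q → Q × Q) (s : Q) (w : List Bool) (c : Bool) :
    sfold σ s (w.concat c) = step σ (sfold σ s w) c := by
  rw [List.concat_eq_append, sfold_append]; rfl

lemma traj_add (σ : Q → Q × Q) (q : Q) (b : ℕ → Bool) (n m : ℕ) :
    traj σ q b (n + m) = sfold σ (traj σ q b n) (List.ofFn fun i : Fin m => b (n + i)) := by
  induction m with
  | zero => simp
  | succ m ih =>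
      have h1 : n + (m + 1) = (n + m) + 1 := by omega
      rw [h1, traj_succ, ih, List.ofFn_succ', sfold_concat]
      simp

lemma mem_cylinder {b : ℕ → Bool} {w : List Bool} :
    b ∈ cylinder w ↔ ∀ i (h : i < w.length), b i = w.get ⟨i, h⟩ := by
  constructor
  · intro hb i h; exact hb ⟨i, h⟩
  · intro hb i; exact hb i i.2

lemma ofFn_eq_of_mem_cylinder {b : ℕ → Bool} {w : List Bool} (hb : b ∈ cylinder w) :
    (List.ofFn fun i : Fin w.length => b i) = w := by
  apply List.ext_get (by simp)
  intro i h1 h2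
  simp only [List.get_ofFn]
  rw [mem_cylinder] at hb
  simpa using (hb i h2).symm ▸ rfl

lemma mem_cylinder_of_prefix {v w : List Bool} (h : v <+: w) {b : ℕ → Bool}
    (hb : b ∈ cylinder w) : b ∈ cylinder v := by
  rw [mem_cylinder] at hb ⊢
  intro i hi
  obtain ⟨t, rfl⟩ := h
  rw [hb i (by simp; omega)]; simp [List.getElem_append_left hi]

lemma traj_eq_sfold (σ : Q → Q × Q) (q : Q) {b : ℕ → Bool} {w : List Bool}
    (hb : b ∈ cylinder w) : traj σ q b w.length = sfold σ q w := by
  have := traj_add σ q b 0 w.length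
  simpa [ofFn_eq_of_mem_cylinder hb, traj] using this

lemma mem_cylinder_ofFn (b : ℕ → Bool) (n : ℕ) :
    b ∈ cylinder (List.ofFn fun i : Fin n => b i) := by
  rw [mem_cylinder]
  intro i h
  simp [List.get_ofFn]

lemma cylinder_append_ofFn {b : ℕ → Bool} {w : List Bool} (hb : b ∈ cylinder w) (m : ℕ) :
    b ∈ cylinder (w ++ List.ofFn fun i : Fin m => b (w.length + i)) := by
  rw [mem_cylinder] at hb ⊢
  intro i h
  rcases lt_or_ge i w.length with hi | hi
  · rw [hb i hi]; simp [List.getElem_append_left hi]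
  · have hlen : i - w.length < m := by
      have := h; simp [List.length_append] at this; omega
    have : (w ++ List.ofFn fun i : Fin m => b (w.length + i)).get ⟨i, h⟩
        = (List.ofFn fun i : Fin m => b (w.length + i)).get ⟨i - w.length, by simpa using hlen⟩ := by
      simp only [List.get_eq_getElem]; exact List.getElem_append_right hi
    rw [this]
    simp only [List.get_ofFn, Fin.cast_mk]
    congr 1
    omega

noncomputable def wt (w : List Bool) : ENNReal := 2⁻¹ ^ w.length

lemma wt_append (v w : List Bool) : wt (v ++ w) = wt v * wt w := by
  simp [wt, pow_add]

lemma measurableSet_cylinder (w : List Bool) : MeasurableSet (_root_.cylinder w) := by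
  have : cylinder w = ⋂ i : Fin w.length, (fun b : ℕ → Bool => b i) ⁻¹' {w.get i} := by
    ext b; simp [_root_.cylinder, Set.mem_iInter]
  rw [this]
  exact MeasurableSet.iInter fun i => (measurable_pi_apply _) (measurableSet_singleton _)

lemma disjoint_cylinder {w₁ w₂ : List Bool} (h1 : ¬ w₁ <+: w₂) (h2 : ¬ w₂ <+: w₁) :
    Disjoint (cylinder w₁) (cylinder w₂) := by
  rw [Set.disjoint_left]
  rintro b hb1 hb2
  rw [mem_cylinder] at hb1 hb2
  wlog hle : w₁.length ≤ w₂.length generalizing w₁ w₂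
  · exact this h2 h1 hb2 hb1 (by omega)
  apply h1
  rw [List.prefix_iff_eq_take]
  apply List.ext_get (by simp [hle])
  intro i hi1 hi2
  have h3 : (List.take w₁.length w₂).get ⟨i, hi2⟩ = w₂.get ⟨i, lt_of_lt_of_le hi1 hle⟩ := by
    simp [List.get_eq_getElem, List.getElem_take]
  rw [h3, ← hb1 i hi1, ← hb2 i (lt_of_lt_of_le hi1 hle)]

/-- Kraft inequality, via the measure. -/
lemma kraft {μ : Measure (ℕ → Bool)} (hμ : IsUniformBernoulli μ) (A : Set (List Bool))
    (hA : ∀ w₁ ∈ A, ∀ w₂ ∈ A, w₁ ≠ w₂ → ¬ w₁ <+: w₂) :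
    ∑' w : A, wt w.1 ≤ 1 := by
  have : IsProbabilityMeasure μ := hμ.1
  have hdisj : Pairwise (Function.onFun Disjoint fun w : A => _root_.cylinder w.1) := by
    intro w₁ w₂ hne
    exact disjoint_cylinder (hA _ w₁.2 _ w₂.2 fun h => hne (Subtype.ext h))
      (hA _ w₂.2 _ w₁.2 fun h => hne (Subtype.ext h).symm)
  calc ∑' w : A, wt w.1 = ∑' w : A, μ (_root_.cylinder w.1) := by
        refine tsum_congr fun w => ?_
        rw [hμ.2]; rfl
    _ = μ (⋃ w : A, _root_.cylinder w.1) :=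
        (measure_iUnion hdisj fun w => measurableSet_cylinder _).symm
    _ ≤ 1 := prob_le_one

section bad

variable (σ : Q → Q × Q) (q a : Q) (u : List Bool) (N : ℕ)

def MinCont (w c : List Bool) : Prop :=
  sfold σ q (w ++ c) = a ∧ ∀ c', c' <+: c → c' ≠ c → sfold σ q (w ++ c') ≠ a

def Blk (s : List Bool) : Prop := s.length = u.length ∧ s ≠ u

inductive BadW : ℕ → List Bool → Prop
  | base (w) (h : w.length = N) : BadW 0 w
  | step (k w c s) (hw : BadW k w) (hc : MinCont σ q a w c) (hs : Blk u s) :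
      BadW (k + 1) (w ++ (c ++ s))

lemma sum_blk {μ : Measure (ℕ → Bool)} (hμ : IsUniformBernoulli μ) :
    ∑' s : {s // Blk u s}, wt s.1 ≤ 1 - 2⁻¹ ^ u.length := by
  have hA : ∀ w₁ ∈ {s : List Bool | s.length = u.length}, ∀ w₂ ∈ {s : List Bool | s.length = u.length},
      w₁ ≠ w₂ → ¬ w₁ <+: w₂ := by
    intro w₁ h₁ w₂ h₂ hne hpre
    exact hne (hpre.eq_of_length (h₁.trans h₂.symm))
  have h1 : ∑' s : {s : List Bool // s.length = u.length}, wt s.1 ≤ 1 :=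
    kraft hμ _ hA
  classical
  have h2 : ∑' s : {s : List Bool // s.length = u.length}, wt s.1
      = wt u + ∑' s : {s : List Bool // s.length = u.length},
          @ite _ (s = (⟨u, rfl⟩ : {s : List Bool // s.length = u.length}))
            (Classical.propDecidable _) 0 (wt s.1) :=
    ENNReal.tsum_eq_add_tsum_ite (⟨u, rfl⟩ : {s : List Bool // s.length = u.length})
  have h3 : ∑' s : {s // Blk u s}, wt s.1
      ≤ ∑' s : {s : List Bool // s.length = u.length},
          @ite _ (s = (⟨u, rfl⟩ : {s : List Bool // s.length = u.length}))
            (Classical.propDecidable _) 0 (wt s.1) := by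
    refine Summable.tsum_le_tsum_of_inj (fun s : {s // Blk u s} => (⟨s.1, s.2.1⟩ : {s : List Bool // s.length = u.length}))
      ?_ (fun _ _ => zero_le) (fun s => ?_) ENNReal.summable ENNReal.summable
    · intro s₁ s₂ h
      simpa [Subtype.ext_iff] using h
    · rw [if_neg]
      intro h
      exact s.2.2 (congrArg Subtype.val h)
  have h4 : ∑' s : {s // Blk u s}, wt s.1 + wt u ≤ 1 := by
    calc ∑' s : {s // Blk u s}, wt s.1 + wt u
        ≤ (∑' s : {s : List Bool // s.length = u.length},
            @ite _ (s = (⟨u, rfl⟩ : {s : List Bool // s.length = u.length}))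
              (Classical.propDecidable _) 0 (wt s.1)) + wt u := add_le_add h3 le_rfl
      _ = ∑' s : {s : List Bool // s.length = u.length}, wt s.1 := by rw [h2, add_comm]
      _ ≤ 1 := h1
  exact ENNReal.le_sub_of_add_le_right (ENNReal.pow_ne_top (by simp)) h4

lemma sum_minCont {μ : Measure (ℕ → Bool)} (hμ : IsUniformBernoulli μ) (w : List Bool) :
    ∑' c : {c // MinCont σ q a w c}, wt c.1 ≤ 1 := by
  refine kraft hμ _ ?_
  intro c₁ h₁ c₂ h₂ hne hpre
  exact h₂.2 c₁ hpre hne h₁.1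

lemma sum_bad {μ : Measure (ℕ → Bool)} (hμ : IsUniformBernoulli μ) (k : ℕ) :
    ∑' w : {w // BadW σ q a u N k w}, wt w.1 ≤ (1 - 2⁻¹ ^ u.length) ^ k := by
  induction k with
  | zero =>
      simp only [pow_zero]
      refine kraft hμ {w | BadW σ q a u N 0 w} ?_
      intro w₁ h₁ w₂ h₂ hne hpre
      have l₁ : w₁.length = N := by cases h₁ with | base _ h => exact h
      have l₂ : w₂.length = N := by cases h₂ with | base _ h => exact h
      exact hne (hpre.eq_of_length (l₁.trans l₂.symm))
  | succ k ih =>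
      classical
      have inv : ∀ x : {x // BadW σ q a u N (k + 1) x},
          ∃ j : (w : {w // BadW σ q a u N k w}) ×
            ({c // MinCont σ q a w.1 c} × {s // Blk u s}),
          j.1.1 ++ (j.2.1.1 ++ j.2.2.1) = x.1 := by
        rintro ⟨x, hx⟩
        cases hx with
        | step k w c s hw hc hs => exact ⟨⟨⟨w, hw⟩, ⟨c, hc⟩, ⟨s, hs⟩⟩, rfl⟩
      choose e he using inv
      have hinj : Function.Injective e := by
        intro x y hxy
        apply Subtype.ext
        rw [← he x, ← he y, hxy]
      have h1 : ∑' x : {x // BadW σ q a u N (k + 1) x}, wt x.1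
          ≤ ∑' j : (w : {w // BadW σ q a u N k w}) ×
              ({c // MinCont σ q a w.1 c} × {s // Blk u s}),
              wt j.1.1 * (wt j.2.1.1 * wt j.2.2.1) := by
        refine Summable.tsum_le_tsum_of_inj e hinj (fun _ _ => zero_le) (fun x => ?_)
          ENNReal.summable ENNReal.summable
        exact le_of_eq (by rw [← he x, wt_append, wt_append])
      have h2 : ∑' j : (w : {w // BadW σ q a u N k w}) ×
              ({c // MinCont σ q a w.1 c} × {s // Blk u s}),
              wt j.1.1 * (wt j.2.1.1 * wt j.2.2.1)
          = ∑' w : {w // BadW σ q a u N k w}, wt w.1 *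
              ((∑' c : {c // MinCont σ q a w.1 c}, wt c.1) *
               (∑' s : {s // Blk u s}, wt s.1)) := by
        rw [ENNReal.tsum_sigma']
        refine tsum_congr fun w => ?_
        rw [ENNReal.tsum_prod']
        simp_rw [ENNReal.tsum_mul_left, ENNReal.tsum_mul_right]
      have h3 : ∑' w : {w // BadW σ q a u N k w}, wt w.1 *
              ((∑' c : {c // MinCont σ q a w.1 c}, wt c.1) *
               (∑' s : {s // Blk u s}, wt s.1))
          ≤ ∑' w : {w // BadW σ q a u N k w}, wt w.1 * (1 - 2⁻¹ ^ u.length) := by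
        refine Summable.tsum_le_tsum (fun w => ?_) ENNReal.summable ENNReal.summable
        refine mul_le_mul' le_rfl ?_
        calc (∑' c : {c // MinCont σ q a w.1 c}, wt c.1) *
               (∑' s : {s // Blk u s}, wt s.1)
            ≤ 1 * (1 - 2⁻¹ ^ u.length) :=
              mul_le_mul' (sum_minCont σ q a hμ w.1) (sum_blk u hμ)
          _ = 1 - 2⁻¹ ^ u.length := one_mul _
      calc ∑' x : {x // BadW σ q a u N (k + 1) x}, wt x.1
          ≤ ∑' w : {w // BadW σ q a u N k w}, wt w.1 * (1 - 2⁻¹ ^ u.length) :=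
            le_trans h1 (le_of_eq h2 |>.trans h3)
        _ = (∑' w : {w // BadW σ q a u N k w}, wt w.1) * (1 - 2⁻¹ ^ u.length) :=
            ENNReal.tsum_mul_right
        _ ≤ (1 - 2⁻¹ ^ u.length) ^ k * (1 - 2⁻¹ ^ u.length) := mul_le_mul' ih le_rfl
        _ = (1 - 2⁻¹ ^ u.length) ^ (k + 1) := (pow_succ _ _).symm

lemma bad_exists {b : ℕ → Bool}
    (hio : ∀ n, ∃ t, n ≤ t ∧ traj σ q b t = a)
    (hno : ∀ t, N ≤ t → traj σ q b t = a →
      (List.ofFn fun j : Fin u.length => b (t + j)) ≠ u) :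
    ∀ k, ∃ w, BadW σ q a u N k w ∧ N ≤ w.length ∧ b ∈ cylinder w := by
  classical
  intro k
  induction k with
  | zero =>
      exact ⟨List.ofFn fun i : Fin N => b i, BadW.base _ (by simp), by simp,
        mem_cylinder_ofFn b N⟩
  | succ k ih =>
      obtain ⟨w, hw, hN, hbw⟩ := ih
      have hex : ∃ t, w.length ≤ t ∧ traj σ q b t = a := hio w.length
      obtain ⟨htw, hta⟩ := Nat.find_spec hex
      set t := Nat.find hex with ht
      set c := (List.ofFn fun i : Fin (t - w.length) => b (w.length + i)) with hc
      set s := (List.ofFn fun j : Fin u.length => b (t + j)) with hs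
      have hclen : c.length = t - w.length := by simp [hc]
      have hbc : b ∈ cylinder (w ++ c) := cylinder_append_ofFn hbw _
      have hwc_len : (w ++ c).length = t := by
        simp only [List.length_append, hclen]; omega
      have hbs : b ∈ cylinder ((w ++ c) ++ s) := by
        have h2 := cylinder_append_ofFn hbc u.length
        rwa [hwc_len] at h2
      have hsfold : sfold σ q (w ++ c) = a := by
        have h3 := traj_eq_sfold σ q hbc
        rw [hwc_len] at h3
        rw [← h3, hta]
      have hmc : MinCont σ q a w c := by
        refine ⟨hsfold, fun c' hpre hne hcontra => ?_⟩
        have hlt : c'.length < c.length := by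
          rcases lt_or_eq_of_le hpre.length_le with h | h
          · exact h
          · exact absurd (hpre.eq_of_length h) hne
        have hbc' : b ∈ cylinder (w ++ c') := by
          obtain ⟨d, hd⟩ := hpre
          exact mem_cylinder_of_prefix ⟨d, by rw [List.append_assoc, hd]⟩ hbc
        have h4 := traj_eq_sfold σ q hbc'
        rw [hcontra] at h4
        have h5 : (w ++ c').length < t := by
          simp only [List.length_append]; omega
        exact (Nat.find_min hex h5) ⟨by simp, h4⟩
      have hblk : Blk u s := by
        refine ⟨by simp [hs], ?_⟩
        exact hno t (le_trans hN htw) hta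
      refine ⟨w ++ (c ++ s), BadW.step k w c s hw hmc hblk, ?_, ?_⟩
      · simp only [List.length_append]; omega
      · rwa [← List.append_assoc]

lemma ae_blocks {μ : Measure (ℕ → Bool)} (hμ : IsUniformBernoulli μ) [Fintype Q] :
    ∀ᵐ b ∂μ, ∀ (a : Q) (u : List Bool) (N : ℕ),
      (∀ n, ∃ t, n ≤ t ∧ traj σ q b t = a) →
      ∃ t, N ≤ t ∧ traj σ q b t = a ∧ (List.ofFn fun j : Fin u.length => b (t + j)) = u := by
  rw [ae_all_iff]
  intro a
  rw [ae_all_iff]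
  intro u
  rw [ae_all_iff]
  intro N
  rw [ae_iff]
  set E := {b : ℕ → Bool | ¬((∀ n, ∃ t, n ≤ t ∧ traj σ q b t = a) →
      ∃ t, N ≤ t ∧ traj σ q b t = a ∧ (List.ofFn fun j : Fin u.length => b (t + j)) = u)}
    with hE
  have hsub : ∀ k, E ⊆ ⋃ w : {w // BadW σ q a u N k w}, _root_.cylinder w.1 := by
    intro k b hb
    rw [hE, Set.mem_setOf_eq, Classical.not_imp] at hb
    obtain ⟨hio, hnq⟩ := hb
    obtain ⟨w, hw, -, hcyl⟩ := bad_exists σ q a u N hio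
      (fun t h1 h2 h3 => hnq ⟨t, h1, h2, h3⟩) k
    exact Set.mem_iUnion.2 ⟨⟨w, hw⟩, hcyl⟩
  have hk : ∀ k, μ E ≤ (1 - 2⁻¹ ^ u.length) ^ k := by
    intro k
    refine le_trans (measure_mono (hsub k)) (le_trans (measure_iUnion_le _) ?_)
    refine le_trans (le_of_eq (tsum_congr fun w => ?_)) (sum_bad σ q a u N hμ k)
    rw [hμ.2]; rfl
  have hlt : (1 - 2⁻¹ ^ u.length : ENNReal) < 1 :=
    ENNReal.sub_lt_self ENNReal.one_ne_top one_ne_zero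
      (pow_ne_zero _ (ENNReal.inv_ne_zero.2 ENNReal.ofNat_ne_top))
  have hlim : Filter.Tendsto (fun k => (1 - 2⁻¹ ^ u.length : ENNReal) ^ k)
      Filter.atTop (nhds 0) := ENNReal.tendsto_pow_atTop_nhds_zero_of_lt_one hlt
  have : μ E ≤ 0 := ge_of_tendsto' hlim hk
  exact le_antisymm this zero_le

end bad

lemma sfold_mem_closed {σ : Q → Q × Q} {C : Set Q}
    (hcl : ∀ x ∈ C, (σ x).1 ∈ C ∧ (σ x).2 ∈ C) :
    ∀ (w : List Bool) {x}, x ∈ C → sfold σ x w ∈ C := by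
  intro w
  induction w with
  | nil => intro x hx; exact hx
  | cons bit w ih =>
      intro x hx
      have h : sfold σ x (bit :: w) = sfold σ (step σ x bit) w := rfl
      rw [h]
      apply ih
      cases bit
      · simpa [step] using (hcl x hx).1
      · simpa [step] using (hcl x hx).2

lemma infinite_iff_unbounded {S : Set ℕ} : S.Infinite ↔ ∀ n, ∃ t, n ≤ t ∧ t ∈ S := by
  constructor
  · intro h n
    by_contra hc
    push_neg at hc
    exact h (Set.Finite.subset (Set.finite_Iio n) fun t ht => lt_of_not_ge fun hle => hc t hle ht)
  · intro h
    intro hfin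
    obtain ⟨B, hB⟩ := hfin.bddAbove
    obtain ⟨t, ht, hts⟩ := h (B + 1)
    exact absurd (hB hts) (by omega)

end Stmt11

/-- An almost-sure policy is almost-surely and positively winning: (i) from every
state of its domain, almost surely the largest state visited infinitely often is
in `F1`; (ii) from every state of `F_{>0} ∩ W`, with positive probability the
trajectory stays in `F_{>0}` forever. -/
theorem stmt_11 {Q : Type} [Fintype Q] [LinearOrder Q]
    (μ : Measure (ℕ → Bool)) (hμ : IsUniformBernoulli μ)
    (F1 F0 : Set Q) (Δ : Set (Q × Q × Q)) (W : Finset Q) (σ : Q → Q × Q)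
    (hσ : IsAlmostSurePolicy F1 F0 Δ W σ) :
    (∀ q ∈ W, ∀ᵐ b ∂μ, ∀ m : Q, {i : ℕ | traj σ q b i = m}.Infinite →
      (∀ q' : Q, {i : ℕ | traj σ q b i = q'}.Infinite → q' ≤ m) → m ∈ F1) ∧
    (∀ q ∈ W, q ∈ F0 → 0 < μ {b | ∀ i : ℕ, traj σ q b i ∈ F0}) := by
  classical
  obtain ⟨hpol, herg, hreach⟩ := hσ
  constructor
  · -- part (i)
    intro q hq
    filter_upwards [Stmt11.ae_blocks σ q hμ] with b hb
    intro m hm hdom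
    set R : Set Q := {x | {i : ℕ | traj σ q b i = x}.Infinite} with hR
    have hioR : ∀ x ∈ R, ∀ n, ∃ t, n ≤ t ∧ traj σ q b t = x := fun x hx n =>
      (Stmt11.infinite_iff_unbounded.1 hx) n
    have hreachR : ∀ x ∈ R, ∀ u : List Bool, Stmt11.sfold σ x u ∈ R := by
      intro x hx u
      rw [hR, Set.mem_setOf_eq, Stmt11.infinite_iff_unbounded]
      intro n
      obtain ⟨t, htn, hta, hblk⟩ := hb x u n (hioR x hx)
      refine ⟨t + u.length, by omega, ?_⟩
      show traj σ q b (t + u.length) = Stmt11.sfold σ x u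
      have h := Stmt11.traj_add σ q b t u.length
      rw [h, hta, hblk]
    have htrajW : ∀ i, traj σ q b i ∈ W := by
      intro i
      induction i with
      | zero => exact hq
      | succ i ih =>
          rw [Stmt11.traj_succ]
          cases hbi : b i
          · simpa [Stmt11.step] using (hpol _ ih).2.1
          · simpa [Stmt11.step] using (hpol _ ih).2.2
    have hRW : R ⊆ (W : Set Q) := by
      intro x hx
      obtain ⟨t, -, ht⟩ := hioR x hx 0
      exact ht ▸ htrajW t
    have hmR : m ∈ R := hm
    have hclosed : ∀ x ∈ R, (σ x).1 ∈ R ∧ (σ x).2 ∈ R := by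
      intro x hx
      constructor
      · simpa [Stmt11.sfold, Stmt11.step] using hreachR x hx [false]
      · simpa [Stmt11.sfold, Stmt11.step] using hreachR x hx [true]
    have hmin : ∀ C' : Set Q, C' ⊆ R → C'.Nonempty →
        (∀ x ∈ C', (σ x).1 ∈ C' ∧ (σ x).2 ∈ C') → C' = R := by
      rintro C' hsub ⟨x, hx⟩ hcl
      apply Set.Subset.antisymm hsub
      intro r hr
      obtain ⟨t1, -, ht1⟩ := hioR x (hsub hx) 0
      obtain ⟨t2, ht12, ht2⟩ := hioR r hr t1
      have hword : Stmt11.sfold σ x (List.ofFn fun i : Fin (t2 - t1) => b (t1 + i)) = r := by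
        have h := Stmt11.traj_add σ q b t1 (t2 - t1)
        have e : t1 + (t2 - t1) = t2 := by omega
        rw [e, ht2, ht1] at h
        exact h.symm
      have hmem := Stmt11.sfold_mem_closed hcl
        (List.ofFn fun i : Fin (t2 - t1) => b (t1 + i)) hx
      rwa [hword] at hmem
    have hEC : IsErgodicClass W σ R := ⟨⟨m, hmR⟩, hRW, hclosed, hmin⟩
    obtain ⟨m', hm'R, hm'max, hm'F1⟩ := herg R hEC
    have h1 : m ≤ m' := hm'max m hmR
    have h2 : m' ≤ m := hdom m' hm'R
    rwa [le_antisymm h1 h2]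
  · -- part (ii)
    intro q hq hq0
    obtain ⟨k, p, hp0, hpstep, hpF, C, hC, hCF0, hpk⟩ := hreach q hq hq0
    set w : List Bool :=
      List.ofFn (fun i : Fin k => if p (i + 1) = (σ (p i)).1 then false else true) with hw
    have hwlen : w.length = k := by simp [hw]
    have key : ∀ b ∈ _root_.cylinder w, ∀ i, traj σ q b i ∈ F0 := by
      intro b hbw
      have htraj : ∀ i ≤ k, traj σ q b i = p i := by
        intro i hi
        induction i with
        | zero => simpa [traj] using hp0.symm
        | succ i ih =>
            have hik : i < k := by omega
            have hti := ih (by omega)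
            rw [Stmt11.traj_succ, hti]
            have hbi : b i = (if p (i + 1) = (σ (p i)).1 then false else true) := by
              have := (Stmt11.mem_cylinder.1 hbw) i (by omega)
              rw [this]
              simp [hw, List.get_ofFn]
            by_cases hcase : p (i + 1) = (σ (p i)).1
            · rw [hbi, if_pos hcase]
              simpa [Stmt11.step] using hcase.symm
            · have h2 : p (i + 1) = (σ (p i)).2 := (hpstep i hik).resolve_left hcase
              rw [hbi, if_neg hcase]
              simpa [Stmt11.step] using h2.symm
      have hCc : ∀ j, traj σ q b (k + j) ∈ C := by
        intro j
        induction j with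
        | zero => simpa [htraj k le_rfl] using hpk
        | succ j ih =>
            have e : k + (j + 1) = (k + j) + 1 := by omega
            rw [e, Stmt11.traj_succ]
            cases hbj : b (k + j)
            · simpa [Stmt11.step] using (hC.2.2.1 _ ih).1
            · simpa [Stmt11.step] using (hC.2.2.1 _ ih).2
      intro i
      rcases le_or_gt i k with hik | hki
      · exact (htraj i hik) ▸ (hpF i hik).1
      · have e : i = k + (i - k) := by omega
        exact hCF0 (e ▸ hCc (i - k))
    have hsub : _root_.cylinder w ⊆ {b | ∀ i, traj σ q b i ∈ F0} := fun b hb => key b hb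
    have hcylμ : μ (_root_.cylinder w) = 2⁻¹ ^ k := by rw [hμ.2, hwlen]
    have hpos : (0 : ENNReal) < 2⁻¹ ^ k := by
      apply pos_iff_ne_zero.2
      exact pow_ne_zero _ (ENNReal.inv_ne_zero.2 ENNReal.ofNat_ne_top)
    calc (0 : ENNReal) < 2⁻¹ ^ k := hpos
      _ = μ (_root_.cylinder w) := hcylμ.symm
      _ ≤ μ {b | ∀ i, traj σ q b i ∈ F0} := measure_mono hsub
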